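/- arXiv:2501.14580 — 8 statements merged into one kernel-verified Lean document; each statement's English description precedes it below -/
import Mathlib

section
/- Let (a_n) be a sequence of positive integers with 0 < a_0 ≤ a_1, a_n = a_{n-1} + a_{n-2} for n ≥ 2, and χ := a_0² + a_1 a_0 − a_1² > 0. Then for all n ≥ 0, 1/a_{2n+1} − 1/a_{2n+2} − 1/a_{2n+3} = χ/(a_{2n+1} a_{2n+2} a_{2n+3}) > 0. -/
theorem recip_odd_identity (a : ℕ → ℕ) (ha0 : 0 < a 0) (h01 : a 0 ≤ a 1)
    (hrec : ∀ n : ℕ, a (n + 2) = a (n + 1) + a n)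
    (χ : ℤ) (hχ : χ = (a 0 : ℤ) ^ 2 + (a 1 : ℤ) * a 0 - (a 1 : ℤ) ^ 2) (hχpos : 0 < χ) :
    ∀ n : ℕ,
      (1 / (a (2 * n + 1) : ℝ) - 1 / (a (2 * n + 2) : ℝ) - 1 / (a (2 * n + 3) : ℝ)
        = (χ : ℝ) / ((a (2 * n + 1) : ℝ) * (a (2 * n + 2) : ℝ) * (a (2 * n + 3) : ℝ))) ∧
      0 < 1 / (a (2 * n + 1) : ℝ) - 1 / (a (2 * n + 2) : ℝ) - 1 / (a (2 * n + 3) : ℝ) := by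
  -- positivity of all terms
  have hpos : ∀ n, 0 < a n := by
    have h2 : ∀ n, 0 < a n ∧ 0 < a (n + 1) := by
      intro n
      induction n with
      | zero => exact ⟨ha0, lt_of_lt_of_le ha0 h01⟩
      | succ k ih =>
        refine ⟨ih.2, ?_⟩
        rw [hrec]
        exact Nat.add_pos_left ih.2 _
    exact fun n => (h2 n).1
  -- d n = a n ^2 + a n * a (n+1) - a (n+1)^2 alternates in sign
  set d : ℕ → ℤ := fun n => (a n : ℤ) ^ 2 + (a n : ℤ) * (a (n + 1) : ℤ) - (a (n + 1) : ℤ) ^ 2 with hd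
  have hstep : ∀ n, d (n + 1) = -d n := by
    intro n
    simp only [hd]
    have := hrec n
    push_cast [this]
    ring
  have hodd : ∀ n, d (2 * n + 1) = -χ := by
    intro n
    induction n with
    | zero => rw [hstep 0, hχ]; simp only [hd]; ring
    | succ k ih =>
      have e1 : 2 * (k + 1) + 1 = (2 * k + 1) + 1 + 1 := by ring
      rw [e1, hstep, hstep, ih]; ring
  intro n
  have h1 := hpos (2 * n + 1)
  have h2 := hpos (2 * n + 2)
  have h3 := hpos (2 * n + 3)
  have c1 : (0:ℝ) < (a (2 * n + 1) : ℝ) := by exact_mod_cast h1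
  have c2 : (0:ℝ) < (a (2 * n + 2) : ℝ) := by exact_mod_cast h2
  have c3 : (0:ℝ) < (a (2 * n + 3) : ℝ) := by exact_mod_cast h3
  have hr : (a (2 * n + 3) : ℝ) = (a (2 * n + 2) : ℝ) + (a (2 * n + 1) : ℝ) := by
    have := hrec (2 * n + 1)
    exact_mod_cast this
  have hnum : (a (2 * n + 2) : ℝ) * (a (2 * n + 3) : ℝ)
      - (a (2 * n + 1) : ℝ) * (a (2 * n + 3) : ℝ)
      - (a (2 * n + 1) : ℝ) * (a (2 * n + 2) : ℝ) = (χ : ℝ) := by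
    have hd1 := hodd n
    have e1 : 2 * n + 1 + 1 = 2 * n + 2 := by ring
    simp only [hd, e1] at hd1
    have hd1' : ((a (2 * n + 1) : ℤ) ^ 2 + (a (2 * n + 1) : ℤ) * (a (2 * n + 2) : ℤ)
        - (a (2 * n + 2) : ℤ) ^ 2 : ℝ) = ((-χ : ℤ) : ℝ) := by exact_mod_cast congrArg (fun z : ℤ => (z : ℝ)) hd1
    push_cast at hd1'
    rw [hr]
    nlinarith [hd1']
  have heq : 1 / (a (2 * n + 1) : ℝ) - 1 / (a (2 * n + 2) : ℝ) - 1 / (a (2 * n + 3) : ℝ)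
      = (χ : ℝ) / ((a (2 * n + 1) : ℝ) * (a (2 * n + 2) : ℝ) * (a (2 * n + 3) : ℝ)) := by
    rw [← hnum]
    field_simp
  refine ⟨heq, ?_⟩
  rw [heq]
  apply div_pos
  · exact_mod_cast hχpos
  · positivity
end

section
/- Let (a_n) be a sequence of positive integers with 0 < a_0 ≤ a_1, a_n = a_{n-1} + a_{n-2} for n ≥ 2, and χ := a_0² + a_1 a_0 − a_1² > 0. Then for all n ≥ 0, 1/a_{2n+3} + 1/a_{2n+4} − 1/a_{2n+2} = χ/(a_{2n+2} a_{2n+3} a_{2n+4}) > 0. -/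
theorem recip_even_identity (a : ℕ → ℕ) (ha0 : 0 < a 0) (h01 : a 0 ≤ a 1)
    (hrec : ∀ n : ℕ, a (n + 2) = a (n + 1) + a n)
    (χ : ℤ) (hχ : χ = (a 0 : ℤ) ^ 2 + (a 1 : ℤ) * a 0 - (a 1 : ℤ) ^ 2) (hχpos : 0 < χ) :
    ∀ n : ℕ,
      (1 / (a (2 * n + 3) : ℝ) + 1 / (a (2 * n + 4) : ℝ) - 1 / (a (2 * n + 2) : ℝ)
        = (χ : ℝ) / ((a (2 * n + 2) : ℝ) * (a (2 * n + 3) : ℝ) * (a (2 * n + 4) : ℝ))) ∧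
      0 < 1 / (a (2 * n + 3) : ℝ) + 1 / (a (2 * n + 4) : ℝ) - 1 / (a (2 * n + 2) : ℝ) := by
  have hpos : ∀ k, 0 < a k := by
    have h : ∀ k, 0 < a k ∧ 0 < a (k + 1) := by
      intro k
      induction k with
      | zero => exact ⟨ha0, lt_of_lt_of_le ha0 h01⟩
      | succ m ih =>
        refine ⟨ih.2, ?_⟩
        rw [hrec m]
        exact Nat.add_pos_left ih.2 _
    exact fun k => (h k).1
  have hchi : ∀ n, (a (2 * n) : ℤ) ^ 2 + (a (2 * n + 1) : ℤ) * (a (2 * n) : ℤ)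
      - (a (2 * n + 1) : ℤ) ^ 2 = χ := by
    intro n
    induction n with
    | zero => simpa using hχ.symm
    | succ m ih =>
      have h1 : (a (2 * m + 2) : ℤ) = (a (2 * m + 1) : ℤ) + (a (2 * m) : ℤ) := by
        exact_mod_cast congrArg (Nat.cast : ℕ → ℤ) (hrec (2 * m))
      have h2 : (a (2 * m + 3) : ℤ) = (a (2 * m + 2) : ℤ) + (a (2 * m + 1) : ℤ) := by
        exact_mod_cast congrArg (Nat.cast : ℕ → ℤ) (hrec (2 * m + 1))
      have e1 : 2 * (m + 1) = 2 * m + 2 := by ring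
      have e2 : 2 * (m + 1) + 1 = 2 * m + 3 := by ring
      rw [e1, show 2*m+2+1 = 2*m+3 from rfl]
      rw [h2, h1]
      linear_combination ih
  intro n
  have hc := hchi (n + 1)
  have e1 : 2 * (n + 1) = 2 * n + 2 := by ring
  have e2 : 2 * (n + 1) + 1 = 2 * n + 3 := by ring
  rw [e1, show 2*n+2+1 = 2*n+3 from rfl] at hc
  have h4 : (a (2 * n + 4) : ℤ) = (a (2 * n + 3) : ℤ) + (a (2 * n + 2) : ℤ) := by
    exact_mod_cast congrArg (Nat.cast : ℕ → ℤ) (hrec (2 * n + 2))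
  have p2 : (0:ℝ) < (a (2 * n + 2) : ℝ) := by exact_mod_cast hpos _
  have p3 : (0:ℝ) < (a (2 * n + 3) : ℝ) := by exact_mod_cast hpos _
  have p4 : (0:ℝ) < (a (2 * n + 4) : ℝ) := by exact_mod_cast hpos _
  have hcR : ((a (2 * n + 2) : ℝ)) ^ 2 + (a (2 * n + 3) : ℝ) * (a (2 * n + 2) : ℝ)
      - (a (2 * n + 3) : ℝ) ^ 2 = (χ : ℝ) := by exact_mod_cast hc
  have h4R : (a (2 * n + 4) : ℝ) = (a (2 * n + 3) : ℝ) + (a (2 * n + 2) : ℝ) := by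
    exact_mod_cast h4
  have num : (a (2*n+2):ℝ) * (a (2*n+4):ℝ) + (a (2*n+2):ℝ) * (a (2*n+3):ℝ)
      - (a (2*n+3):ℝ) * (a (2*n+4):ℝ) = (χ : ℝ) := by
    linear_combination hcR + ((a (2*n+2):ℝ) - (a (2*n+3):ℝ)) * h4R
  have key : (1 / (a (2 * n + 3) : ℝ) + 1 / (a (2 * n + 4) : ℝ) - 1 / (a (2 * n + 2) : ℝ)
      = (χ : ℝ) / ((a (2 * n + 2) : ℝ) * (a (2 * n + 3) : ℝ) * (a (2 * n + 4) : ℝ))) := by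
    rw [← num]
    field_simp
  refine ⟨key, ?_⟩
  rw [key]
  positivity
end

section
/- Let (a_n) be a sequence of positive integers with 0 < a_0 ≤ a_1 and a_n = a_{n-1} + a_{n-2} for n ≥ 2. Then for all n ≥ 0, 1/a_{2n+2} − 1/a_{2n+3} − 1/a_{2n+5} > 0. -/
theorem recip_skip_pos (a : ℕ → ℕ) (ha0 : 0 < a 0) (h01 : a 0 ≤ a 1)
    (hrec : ∀ n : ℕ, a (n + 2) = a (n + 1) + a n) :
    ∀ n : ℕ,
      0 < 1 / (a (2 * n + 2) : ℝ) - 1 / (a (2 * n + 3) : ℝ) - 1 / (a (2 * n + 5) : ℝ) := by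
  -- positivity and monotonicity
  have hpos : ∀ n, 0 < a n := by
    intro n
    induction n using Nat.strong_induction_on with
    | _ n ih =>
      match n with
      | 0 => exact ha0
      | 1 => exact lt_of_lt_of_le ha0 h01
      | (m+2) =>
        rw [hrec m]
        have := ih m (by omega)
        omega
  have hmono : ∀ n, a n ≤ a (n + 1) := by
    intro n
    match n with
    | 0 => exact h01
    | (m+1) => rw [hrec m]; have := hpos m; omega
  intro n
  have e3 : a (2 * n + 3) = a (2 * n + 2) + a (2 * n + 1) := by
    have h := hrec (2 * n + 1)
    rw [show 2 * n + 1 + 2 = 2 * n + 3 by ring, show 2 * n + 1 + 1 = 2 * n + 2 by ring] at h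
    exact h
  have e4 : a (2 * n + 4) = a (2 * n + 3) + a (2 * n + 2) := by
    have h := hrec (2 * n + 2)
    rw [show 2 * n + 2 + 2 = 2 * n + 4 by ring, show 2 * n + 2 + 1 = 2 * n + 3 by ring] at h
    exact h
  have e5 : a (2 * n + 5) = a (2 * n + 4) + a (2 * n + 3) := by
    have h := hrec (2 * n + 3)
    rw [show 2 * n + 3 + 2 = 2 * n + 5 by ring, show 2 * n + 3 + 1 = 2 * n + 4 by ring] at h
    exact h
  have e2 : a (2 * n + 2) = a (2 * n + 1) + a (2 * n) := by
    have h := hrec (2 * n)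
    rw [show 2 * n + 1 = 2 * n + 1 by ring] at h
    exact h
  set B : ℝ := (a (2 * n + 1) : ℝ) with hB
  set C : ℝ := (a (2 * n + 2) : ℝ) with hC
  have hBpos : 0 < B := by rw [hB]; exact_mod_cast hpos (2 * n + 1)
  have hCpos : 0 < C := by rw [hC]; exact_mod_cast hpos (2 * n + 2)
  have hC2B : C ≤ 2 * B := by
    have h1 : a (2 * n) ≤ a (2 * n + 1) := hmono (2 * n)
    have : (a (2 * n + 2) : ℝ) ≤ 2 * (a (2 * n + 1) : ℝ) := by
      have : a (2 * n + 2) ≤ 2 * a (2 * n + 1) := by omega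
      exact_mod_cast this
    exact this
  have c3 : (a (2 * n + 3) : ℝ) = B + C := by rw [e3]; push_cast; ring
  have c5 : (a (2 * n + 5) : ℝ) = 2 * B + 3 * C := by
    rw [e5, e4, e3]; push_cast; ring
  rw [c3, c5]
  have h2 : (0:ℝ) < B + C := by linarith
  have h3 : (0:ℝ) < 2 * B + 3 * C := by linarith
  have key : 1 / (B + C) + 1 / (2 * B + 3 * C) < 1 / C := by
    rw [div_add_div _ _ (ne_of_gt h2) (ne_of_gt h3), div_lt_div_iff₀ (by positivity) hCpos]
    nlinarith [sq_nonneg B, mul_pos hBpos hCpos]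
  linarith
end

section
/- Let (a_n) be a sequence of positive integers with 0 < a_0 ≤ a_1, a_n = a_{n-1} + a_{n-2} for n ≥ 2, and χ := a_0² + a_1 a_0 − a_1² > 0. Let n ≥ 0 and let k ≥ 0 satisfy a_{2n+2} F_k + a_{2n+3} F_{k+1} ≤ a_{2n+2} a_{2n+3} a_{2n+4} / χ (equivalently χ · a_{2n+3+k} ≤ a_{2n+2} a_{2n+3} a_{2n+4}). Then 1/a_{2n+3} + 1/a_{2n+4} ≤ 1/a_{2n+2} + 1/a_{2n+3+k}. -/
theorem greedy_ineq (a : ℕ → ℕ) (ha0 : 0 < a 0) (h01 : a 0 ≤ a 1)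
    (hrec : ∀ n : ℕ, a (n + 2) = a (n + 1) + a n)
    (χ : ℤ) (hχ : χ = (a 0 : ℤ) ^ 2 + (a 1 : ℤ) * a 0 - (a 1 : ℤ) ^ 2) (hχpos : 0 < χ)
    (n k : ℕ)
    (hk : χ * ((a (2 * n + 2) : ℤ) * Nat.fib k + (a (2 * n + 3) : ℤ) * Nat.fib (k + 1))
      ≤ (a (2 * n + 2) : ℤ) * (a (2 * n + 3) : ℤ) * (a (2 * n + 4) : ℤ)) :
    1 / (a (2 * n + 3) : ℝ) + 1 / (a (2 * n + 4) : ℝ)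
      ≤ 1 / (a (2 * n + 2) : ℝ) + 1 / (a (2 * n + 3 + k) : ℝ) := by
  have hpos : ∀ m, 0 < a m := by
    intro m
    induction m using Nat.twoStepInduction with
    | zero => exact ha0
    | one => exact lt_of_lt_of_le ha0 h01
    | more m ih1 ih2 => rw [hrec]; omega
  -- closed form via Fibonacci
  have hfib : ∀ m j, a (m + 1 + j) = a m * Nat.fib j + a (m + 1) * Nat.fib (j + 1) := by
    intro m j
    induction j using Nat.twoStepInduction with
    | zero => simp
    | one =>
      rw [show m + 1 + 1 = m + 2 by omega, hrec m, Nat.fib_one, Nat.fib_two]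
      omega
    | more j ih1 ih2 =>
      have f3 : Nat.fib (j + 2 + 1) = Nat.fib (j + 1) + Nat.fib (j + 1 + 1) := by
        rw [show j + 2 + 1 = j + 1 + 2 by omega]; exact Nat.fib_add_two
      have f2 : Nat.fib (j + 1 + 1) = Nat.fib j + Nat.fib (j + 1) := by
        rw [show j + 1 + 1 = j + 2 by omega]; exact Nat.fib_add_two
      rw [show m + 1 + (j + 2) = (m + 1 + j) + 2 by omega, hrec,
        show m + 1 + j + 1 = m + 1 + (j + 1) by omega, ih2, ih1, f3, f2]
      ring
  -- invariant at even indices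
  have hE : ∀ m, ((a (2 * m) : ℤ)) ^ 2 + (a (2 * m) : ℤ) * (a (2 * m + 1) : ℤ)
      - (a (2 * m + 1) : ℤ) ^ 2 = χ := by
    intro m
    induction m with
    | zero =>
      simp only [Nat.mul_zero, Nat.zero_add]
      rw [hχ]; ring
    | succ m ih =>
      have e1 : a (2 * m + 2) = a (2 * m + 1) + a (2 * m) := hrec (2 * m)
      have e2 : a (2 * m + 3) = a (2 * m + 2) + a (2 * m + 1) := hrec (2 * m + 1)
      have h1 : 2 * (m + 1) = 2 * m + 2 := by ring
      have h2 : 2 * (m + 1) + 1 = 2 * m + 3 := by ring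
      have h3 : 2 * m + 2 + 1 = 2 * m + 3 := by omega
      rw [h1, h3, e2, e1]
      push_cast
      linarith [ih, sq_nonneg ((a (2*m) : ℤ))]
  have hE1 := hE (n + 1)
  have h1 : 2 * (n + 1) = 2 * n + 2 := by ring
  have h2 : 2 * (n + 1) + 1 = 2 * n + 3 := by ring
  have h3 : 2 * n + 2 + 1 = 2 * n + 3 := by omega
  rw [h1] at hE1
  rw [h3] at hE1
  have hd : a (2 * n + 4) = a (2 * n + 3) + a (2 * n + 2) := hrec (2 * n + 2)
  have hx : a (2 * n + 3 + k) = a (2 * n + 2) * Nat.fib k + a (2 * n + 3) * Nat.fib (k + 1) := by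
    have : 2 * n + 3 + k = 2 * n + 2 + 1 + k := by ring
    rw [this, hfib]
  -- integer inequality χ * x ≤ b * c * d
  have hkey : χ * (a (2 * n + 3 + k) : ℤ)
      ≤ (a (2 * n + 2) : ℤ) * (a (2 * n + 3) : ℤ) * (a (2 * n + 4) : ℤ) := by
    rw [hx]; push_cast; exact hk
  set B : ℝ := (a (2 * n + 2) : ℝ) with hB
  set C : ℝ := (a (2 * n + 3) : ℝ) with hC
  set D : ℝ := (a (2 * n + 4) : ℝ) with hD
  set X : ℝ := (a (2 * n + 3 + k) : ℝ) with hX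
  have hBp : 0 < B := by rw [hB]; exact_mod_cast hpos _
  have hCp : 0 < C := by rw [hC]; exact_mod_cast hpos _
  have hDp : 0 < D := by rw [hD]; exact_mod_cast hpos _
  have hXp : 0 < X := by rw [hX]; exact_mod_cast hpos _
  have hDr : D = C + B := by rw [hB, hC, hD]; exact_mod_cast hd
  have hEr : B ^ 2 + B * C - C ^ 2 = (χ : ℝ) := by
    rw [hB, hC]; exact_mod_cast congrArg (Int.cast : ℤ → ℝ) hE1
  have hkr : (χ : ℝ) * X ≤ B * C * D := by rw [hB, hC, hD, hX]; exact_mod_cast hkey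
  have heq : 1 / C + 1 / D - 1 / B = (χ : ℝ) / (B * C * D) := by
    rw [hDr, ← hEr]
    field_simp
    ring
  have hle : (χ : ℝ) / (B * C * D) ≤ 1 / X := by
    rw [div_le_div_iff₀ (by positivity) hXp]
    linarith
  linarith
end

section
/- For all n ≥ 0, F_{6n+8} ≤ F_{2n+3} F_{2n+4} F_{2n+5} < F_{6n+9}, where F is the Fibonacci sequence. -/
set_option maxHeartbeats 1000000 in
theorem fib_prod_bounds (n : ℕ) :
    Nat.fib (6 * n + 8) ≤ Nat.fib (2 * n + 3) * Nat.fib (2 * n + 4) * Nat.fib (2 * n + 5) ∧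
    Nat.fib (2 * n + 3) * Nat.fib (2 * n + 4) * Nat.fib (2 * n + 5) < Nat.fib (6 * n + 9) := by
  set a := Nat.fib (2 * n + 2) with ha
  set b := Nat.fib (2 * n + 3) with hb
  have hab : a ≤ b := by rw [ha, hb]; exact Nat.fib_le_fib_succ
  have ha1 : 1 ≤ a := by
    rw [ha]; have := Nat.fib_pos.2 (show 0 < 2 * n + 2 by omega); omega
  have h4 : Nat.fib (2 * n + 4) = a + b := by
    have := Nat.fib_add_two (n := 2 * n + 2); simpa using this
  have h5 : Nat.fib (2 * n + 5) = b + (a + b) := by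
    have := Nat.fib_add_two (n := 2 * n + 3)
    rw [show 2 * n + 3 + 2 = 2 * n + 5 by ring] at this
    rw [this, h4]
  have e1 : Nat.fib (4 * n + 5) = a * a + b * b := by
    have := Nat.fib_add (2 * n + 2) (2 * n + 2)
    rw [show 2 * n + 2 + (2 * n + 2) + 1 = 4 * n + 5 by ring] at this
    rw [this]
  have e2 : Nat.fib (4 * n + 6) = a * b + b * (a + b) := by
    have := Nat.fib_add (2 * n + 2) (2 * n + 3)
    rw [show 2 * n + 2 + (2 * n + 3) + 1 = 4 * n + 6 by ring,
      show 2 * n + 3 + 1 = 2 * n + 4 by ring] at this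
    rw [this, h4]
  have e3 : Nat.fib (4 * n + 7) = b * b + (a + b) * (a + b) := by
    have := Nat.fib_add (2 * n + 3) (2 * n + 3)
    rw [show 2 * n + 3 + (2 * n + 3) + 1 = 4 * n + 7 by ring,
      show 2 * n + 3 + 1 = 2 * n + 4 by ring] at this
    rw [this, h4]
  have e4 : Nat.fib (6 * n + 8) = (a * a + b * b) * a + (a * b + b * (a + b)) * b := by
    have := Nat.fib_add (4 * n + 5) (2 * n + 2)
    rw [show 4 * n + 5 + (2 * n + 2) + 1 = 6 * n + 8 by ring,
      show 4 * n + 5 + 1 = 4 * n + 6 by ring] at this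
    rw [this, e1, e2]
  have e5 : Nat.fib (6 * n + 9) =
      (a * b + b * (a + b)) * a + (b * b + (a + b) * (a + b)) * b := by
    have := Nat.fib_add (4 * n + 6) (2 * n + 2)
    rw [show 4 * n + 6 + (2 * n + 2) + 1 = 6 * n + 9 by ring,
      show 4 * n + 6 + 1 = 4 * n + 7 by ring] at this
    rw [this, e2, e3]
  rw [e4, e5, h4, h5]
  have key : a * a * a ≤ a * a * b := Nat.mul_le_mul_left _ hab
  constructor
  · nlinarith [key]
  · nlinarith [Nat.mul_le_mul ha1 ha1, Nat.one_le_iff_ne_zero.mp (ha1.trans hab)]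
end

section
/- For every n ≥ 0, the largest nonnegative integer ξ such that F_{2n+3} F_ξ + F_{2n+4} F_{ξ+1} ≤ F_{2n+3} F_{2n+4} F_{2n+5} is ξ = 4n + 4. -/
theorem fib_xi_value (n : ℕ) :
    IsGreatest {ξ : ℕ |
      Nat.fib (2 * n + 3) * Nat.fib ξ + Nat.fib (2 * n + 4) * Nat.fib (ξ + 1)
        ≤ Nat.fib (2 * n + 3) * Nat.fib (2 * n + 4) * Nat.fib (2 * n + 5)}
      (4 * n + 4) := by
  set a := Nat.fib (2 * n + 2) with ha
  set b := Nat.fib (2 * n + 3) with hb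
  clear_value a b
  have hab : a ≤ b := by rw [ha, hb]; exact Nat.fib_mono (by omega)
  have ha1 : 1 ≤ a := by
    rw [ha]
    have := Nat.fib_pos.mpr (show 0 < 2 * n + 2 by omega)
    omega
  have h4 : Nat.fib (2 * n + 4) = a + b := by
    have := Nat.fib_add_two (n := 2 * n + 2)
    rw [show 2*n+2+2 = 2*n+4 from by ring, show 2*n+2+1 = 2*n+3 from by ring, ← ha, ← hb] at this
    omega
  have h5 : Nat.fib (2 * n + 5) = a + 2 * b := by
    have := Nat.fib_add_two (n := 2 * n + 3)
    rw [show 2*n+3+2 = 2*n+5 from by ring, show 2*n+3+1 = 2*n+4 from by ring, h4, ← hb] at this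
    omega
  have h45 : Nat.fib (4 * n + 5) = a * a + b * b := by
    have := Nat.fib_add (2 * n + 2) (2 * n + 2)
    rw [show 2*n+2+(2*n+2)+1 = 4*n+5 from by ring, show 2*n+2+1 = 2*n+3 from by ring, ← ha, ← hb] at this
    rw [this]
  have h46 : Nat.fib (4 * n + 6) = a * b + b * (a + b) := by
    have := Nat.fib_add (2 * n + 2) (2 * n + 3)
    rw [show 2*n+2+(2*n+3)+1 = 4*n+6 from by ring, show 2*n+2+1 = 2*n+3 from by ring,
        show 2*n+3+1 = 2*n+4 from by ring, h4, ← ha, ← hb] at this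
    rw [this]
  have h68 : Nat.fib (6 * n + 8) = a * (a * a + b * b) + b * (a * b + b * (a + b)) := by
    have := Nat.fib_add (2 * n + 2) (4 * n + 5)
    rw [show 2*n+2+(4*n+5)+1 = 6*n+8 from by ring, show 2*n+2+1 = 2*n+3 from by ring,
        show 4*n+5+1 = 4*n+6 from by ring, h45, h46, ← ha, ← hb] at this
    rw [this]
  have h69 : Nat.fib (6 * n + 9)
      = b * (a * a + b * b) + (a + b) * (a * b + b * (a + b)) := by
    have := Nat.fib_add (2 * n + 3) (4 * n + 5)
    rw [show 2*n+3+(4*n+5)+1 = 6*n+9 from by ring, show 2*n+3+1 = 2*n+4 from by ring,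
        show 4*n+5+1 = 4*n+6 from by ring, h45, h46, h4, ← hb] at this
    rw [this]
  constructor
  · show b * Nat.fib (4 * n + 4) + Nat.fib (2 * n + 4) * Nat.fib (4 * n + 4 + 1)
      ≤ b * Nat.fib (2 * n + 4) * Nat.fib (2 * n + 5)
    have key := Nat.fib_add (2 * n + 3) (4 * n + 4)
    rw [show 2*n+3+(4*n+4)+1 = 6*n+8 from by ring, show 2*n+3+1 = 2*n+4 from by ring, ← hb] at key
    rw [show (4:ℕ)*n+4+1 = 4*n+5 from by ring, ← key, h68, h4, h5]
    nlinarith [sq_nonneg a, sq_nonneg b]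
  · intro ξ hξ
    by_contra hlt
    push_neg at hlt
    have hmem : b * Nat.fib ξ + Nat.fib (2 * n + 4) * Nat.fib (ξ + 1)
        ≤ b * Nat.fib (2 * n + 4) * Nat.fib (2 * n + 5) := hξ
    have key := Nat.fib_add (2 * n + 3) ξ
    rw [show 2*n+3+1 = 2*n+4 from by ring, ← hb] at key
    rw [← key] at hmem
    have hmono : Nat.fib (6 * n + 9) ≤ Nat.fib (2 * n + 3 + ξ + 1) :=
      Nat.fib_mono (by omega)
    have : Nat.fib (6 * n + 9) ≤ b * Nat.fib (2 * n + 4) * Nat.fib (2 * n + 5) :=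
      le_trans hmono hmem
    rw [h69, h4, h5] at this
    have hb1 : 1 ≤ b := le_trans ha1 hab
    have hpos : 0 < a * a * b :=
      Nat.mul_pos (Nat.mul_pos (by omega) (by omega)) (by omega)
    have hring : b * (a * a + b * b) + (a + b) * (a * b + b * (a + b))
        = b * (a + b) * (a + 2 * b) + 2 * (a * a * b) := by ring
    rw [hring] at this
    linarith
end

section
/- For all n ≥ 0, 5 · L_{6n+11} ≤ L_{2n+4} L_{2n+5} L_{2n+6} < 5 · L_{6n+12}, where L is the Lucas sequence. -/
def lucas : ℕ → ℕ
  | 0 => 2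
  | 1 => 1
  | n + 2 => lucas (n + 1) + lucas n

lemma lucas_add_two (k : ℕ) : lucas (k + 2) = lucas (k + 1) + lucas k := rfl

lemma lucas_pos (n : ℕ) : 0 < lucas n := by
  induction n using Nat.strong_induction_on with
  | _ n ih =>
    match n with
    | 0 => simp [lucas]
    | 1 => simp [lucas]
    | k + 2 =>
      rw [lucas_add_two]
      have := ih k (by omega)
      omega

lemma lucas_lt_succ (n : ℕ) (h : 1 ≤ n) : lucas n < lucas (n + 1) := by
  obtain ⟨k, rfl⟩ := Nat.exists_eq_add_of_le h
  rw [add_comm 1 k, lucas_add_two]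
  have h1 := lucas_pos k
  have h2 := lucas_pos (k + 1)
  omega

lemma lucas_mono {a b : ℕ} (ha : 1 ≤ a) (hab : a ≤ b) : lucas a ≤ lucas b := by
  induction b, hab using Nat.le_induction with
  | base => exact le_refl _
  | succ b hb ih => exact le_trans ih (le_of_lt (lucas_lt_succ b (le_trans ha hb)))

lemma lucas_strict_mono {a b : ℕ} (ha : 1 ≤ a) (hab : a < b) : lucas a < lucas b := by
  have h1 : lucas a < lucas (a + 1) := lucas_lt_succ a ha
  have h2 : lucas (a + 1) ≤ lucas b := lucas_mono (by omega) (by omega)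
  omega

lemma lucas_mul (j : ℕ) : ∀ m : ℕ,
    (lucas (m + 2 * j) * lucas (2 * j) = lucas (m + 4 * j) + lucas m) ∧
    (lucas (m + (2 * j + 1)) * lucas (2 * j + 1) + lucas m = lucas (m + (4 * j + 2))) := by
  induction j with
  | zero =>
    intro m
    refine ⟨?_, ?_⟩
    · show lucas (m + 0) * lucas 0 = lucas (m + 0) + lucas m
      show lucas (m + 0) * 2 = lucas (m + 0) + lucas m
      simp; ring
    · show lucas (m + 1) * lucas 1 + lucas m = lucas (m + 2)
      show lucas (m + 1) * 1 + lucas m = lucas (m + 2)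
      rw [lucas_add_two]; ring
  | succ j ih =>
    have hE : ∀ m : ℕ, lucas (m + 2 * (j + 1)) * lucas (2 * (j + 1)) =
        lucas (m + 4 * (j + 1)) + lucas m := by
      intro m
      have hA := (ih (m + 2)).1
      have hB := (ih (m + 1)).2
      have e1 : m + 2 + 2 * j = m + 2 * (j + 1) := by ring
      have e2 : m + 1 + (2 * j + 1) = m + 2 * (j + 1) := by ring
      rw [e1] at hA
      rw [e2] at hB
      have r1 : lucas (2 * (j + 1)) = lucas (2 * j + 1) + lucas (2 * j) := by
        rw [show 2 * (j + 1) = 2 * j + 2 from by ring, lucas_add_two]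
      have r2 : lucas (m + 4 * (j + 1)) =
          lucas (m + 1 + (4 * j + 2)) + lucas (m + 2 + 4 * j) := by
        rw [show m + 4 * (j + 1) = (m + 4 * j + 2) + 2 from by ring, lucas_add_two]
        congr 2 <;> ring
      have r3 : lucas (m + 2) = lucas (m + 1) + lucas m := lucas_add_two m
      rw [r1, mul_add, hA, r2, r3]
      omega
    intro m
    refine ⟨hE m, ?_⟩
    have hA := hE (m + 1)
    have hB := (ih (m + 2)).2
    have e1 : m + 1 + 2 * (j + 1) = m + (2 * (j + 1) + 1) := by ring
    have e2 : m + 2 + (2 * j + 1) = m + (2 * (j + 1) + 1) := by ring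
    rw [e1] at hA
    rw [e2] at hB
    have r1 : lucas (2 * (j + 1) + 1) = lucas (2 * (j + 1)) + lucas (2 * j + 1) := by
      rw [show 2 * (j + 1) + 1 = (2 * j + 1) + 2 from by ring, lucas_add_two,
        show 2 * j + 1 + 1 = 2 * (j + 1) from by ring]
    have r2 : lucas (m + (4 * (j + 1) + 2)) =
        lucas (m + 1 + 4 * (j + 1)) + lucas (m + 2 + (4 * j + 2)) := by
      rw [show m + (4 * (j + 1) + 2) = (m + 4 * j + 4) + 2 from by ring, lucas_add_two]
      congr 2 <;> ring
    have r3 : lucas (m + 2) = lucas (m + 1) + lucas m := lucas_add_two m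
    rw [r1, mul_add, hA, r2]
    linarith [hB, r3]

theorem lucas_prod_bounds (n : ℕ) :
    5 * lucas (6 * n + 11) ≤ lucas (2 * n + 4) * lucas (2 * n + 5) * lucas (2 * n + 6) ∧
    lucas (2 * n + 4) * lucas (2 * n + 5) * lucas (2 * n + 6) < 5 * lucas (6 * n + 12) := by
  -- product identity: L(2n+4) L(2n+5) L(2n+6) = L(6n+15) + L(2n+3) + L(2n+6)
  have h1 := (lucas_mul (n + 2) 1).1
  -- lucas (1 + 2(n+2)) * lucas (2(n+2)) = lucas (1 + 4(n+2)) + lucas 1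
  rw [show 1 + 2 * (n + 2) = 2 * n + 5 from by ring,
      show 2 * (n + 2) = 2 * n + 4 from by ring,
      show 1 + 4 * (n + 2) = 4 * n + 9 from by ring] at h1
  have h2 := (lucas_mul (n + 3) (2 * n + 3)).1
  rw [show 2 * n + 3 + 2 * (n + 3) = 4 * n + 9 from by ring,
      show 2 * (n + 3) = 2 * n + 6 from by ring,
      show 2 * n + 3 + 4 * (n + 3) = 6 * n + 15 from by ring] at h2
  have hl1 : lucas 1 = 1 := rfl
  have hprod : lucas (2 * n + 4) * lucas (2 * n + 5) * lucas (2 * n + 6) =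
      lucas (6 * n + 15) + lucas (2 * n + 3) + lucas (2 * n + 6) := by
    have : lucas (2 * n + 4) * lucas (2 * n + 5) = lucas (4 * n + 9) + 1 := by
      rw [mul_comm]; omega
    rw [this, add_mul, one_mul, h2]
  -- L(6n+15) = 3 L(6n+12) + 2 L(6n+11)
  have e15 : lucas (6 * n + 15) = lucas (6 * n + 14) + lucas (6 * n + 13) :=
    lucas_add_two (6 * n + 13)
  have e14 : lucas (6 * n + 14) = lucas (6 * n + 13) + lucas (6 * n + 12) :=
    lucas_add_two (6 * n + 12)
  have e13 : lucas (6 * n + 13) = lucas (6 * n + 12) + lucas (6 * n + 11) :=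
    lucas_add_two (6 * n + 11)
  have e12 : lucas (6 * n + 12) = lucas (6 * n + 11) + lucas (6 * n + 10) :=
    lucas_add_two (6 * n + 10)
  have m1 : lucas (2 * n + 3) < lucas (6 * n + 10) := lucas_strict_mono (by omega) (by omega)
  have m2 : lucas (2 * n + 6) ≤ lucas (6 * n + 10) := lucas_mono (by omega) (by omega)
  have m3 : lucas (6 * n + 11) ≤ lucas (6 * n + 12) := lucas_mono (by omega) (by omega)
  have p1 := lucas_pos (2 * n + 3)
  have p2 := lucas_pos (2 * n + 6)
  constructor
  · rw [hprod]; omega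
  · rw [hprod]; omega
end

section
/- Let (a_n) be a sequence of positive integers with 0 < a_0 ≤ a_1, a_n = a_{n-1} + a_{n-2} for n ≥ 2, and χ := a_0² + a_1 a_0 − a_1² > 0. Suppose θ ∈ (0,1] satisfies 1/a_{2m+3} + 1/a_{2m+4} < θ ≤ 1/a_{2m+2} + 1/a_{2m+3+ξ(m)} for some m ≥ 0, where ξ(m) is the largest nonnegative integer with χ · a_{2m+3+ξ(m)} ≤ a_{2m+2} a_{2m+3} a_{2m+4}. Then there exist indices 1 ≤ p ≤ q (namely p = 2m+3, q = 2m+4) such that 1/a_p + 1/a_q < θ and for the greedy indices g_1, g_2 of θ one has 1/a_{g_1} + 1/a_{g_2} < 1/a_p + 1/a_q; i.e., the greedy two-term underapproximation of θ is not optimal. -/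
/-- If `θ` lies in the exceptional interval, then the greedy two-term
underapproximation of `θ` is not optimal: the pair `(2m+3, 2m+4)` beats it. -/
theorem greedy_not_best_of_mem_interval (a : ℕ → ℕ) (ha0 : 0 < a 0) (h01 : a 0 ≤ a 1)
    (hrec : ∀ n : ℕ, a (n + 2) = a (n + 1) + a n)
    (χ : ℤ) (hχ : χ = (a 0 : ℤ) ^ 2 + (a 1 : ℤ) * a 0 - (a 1 : ℤ) ^ 2) (hχpos : 0 < χ)
    (θ : ℝ) (hθ : θ ∈ Set.Ioc (0 : ℝ) 1)
    (m ξ : ℕ)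
    (hξ : IsGreatest {k : ℕ |
      χ * (a (2 * m + 3 + k) : ℤ)
        ≤ (a (2 * m + 2) : ℤ) * (a (2 * m + 3) : ℤ) * (a (2 * m + 4) : ℤ)} ξ)
    (hlow : 1 / (a (2 * m + 3) : ℝ) + 1 / (a (2 * m + 4) : ℝ) < θ)
    (hhigh : θ ≤ 1 / (a (2 * m + 2) : ℝ) + 1 / (a (2 * m + 3 + ξ) : ℝ))
    (g₁ g₂ : ℕ)
    (hg₁ : IsLeast {n : ℕ | 1 ≤ n ∧ 1 / (a n : ℝ) < θ} g₁)
    (hg₂ : IsLeast {n : ℕ | g₁ ≤ n ∧ 1 / (a n : ℝ) < θ - 1 / (a g₁ : ℝ)} g₂) :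
    ∃ p q : ℕ, 1 ≤ p ∧ p ≤ q ∧ 1 / (a p : ℝ) + 1 / (a q : ℝ) < θ ∧
      1 / (a g₁ : ℝ) + 1 / (a g₂ : ℝ) < 1 / (a p : ℝ) + 1 / (a q : ℝ) := by
  -- positivity of the sequence
  have hpos : ∀ n, 0 < a n := by
    have H : ∀ n, 0 < a n ∧ 0 < a (n + 1) := by
      intro n
      induction n with
      | zero => exact ⟨ha0, lt_of_lt_of_le ha0 h01⟩
      | succ k ih => exact ⟨ih.2, by rw [hrec k]; omega⟩
    exact fun n => (H n).1
  have hposR : ∀ n, (0 : ℝ) < (a n : ℝ) := fun n => by exact_mod_cast hpos n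
  -- monotonicity
  have hmono : Monotone a := by
    apply monotone_nat_of_le_succ
    intro n
    cases n with
    | zero => exact h01
    | succ k => rw [hrec k]; omega
  -- the alternating invariant
  have hE : ∀ n, (a n : ℤ) * a (n + 3) - (a (n + 1) : ℤ) * a (n + 2) = (-1) ^ n * χ := by
    intro n
    induction n with
    | zero =>
      have h2 : (a 2 : ℤ) = a 1 + a 0 := by exact_mod_cast hrec 0
      have h3 : (a 3 : ℤ) = a 2 + a 1 := by exact_mod_cast hrec 1
      rw [hχ, h3, h2]; ring
    | succ k ih =>
      have h4 : (a (k + 4) : ℤ) = a (k + 3) + a (k + 2) := by exact_mod_cast hrec (k + 2)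
      have h0 : (a (k + 2) : ℤ) = a (k + 1) + a k := by exact_mod_cast hrec k
      have e1 : k + 1 + 3 = k + 4 := by omega
      have e2 : k + 1 + 2 = k + 3 := by omega
      have e3 : k + 1 + 1 = k + 2 := by omega
      rw [e1, e2, e3, pow_succ]
      linear_combination -ih + (-(a (k + 3) : ℤ)) * h0 + (a (k + 1) : ℤ) * h4
  have hEe : ∀ j, (a (2 * j) : ℤ) * a (2 * j + 3) - (a (2 * j + 1) : ℤ) * a (2 * j + 2) = χ := by
    intro j
    have := hE (2 * j)
    rwa [pow_mul, neg_one_sq, one_pow, one_mul] at this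
  have hEo : ∀ j, (a (2 * j + 1) : ℤ) * a (2 * j + 4) - (a (2 * j + 2) : ℤ) * a (2 * j + 3)
      = -χ := by
    intro j
    have h := hE (2 * j + 1)
    rw [pow_succ, pow_mul, neg_one_sq, one_pow, one_mul] at h
    rw [(by omega : 2 * j + 1 + 3 = 2 * j + 4), (by omega : 2 * j + 1 + 2 = 2 * j + 3),
      (by omega : 2 * j + 1 + 1 = 2 * j + 2)] at h
    linarith [h]
  -- key integer identity at index 2m+2
  have hkeyZ : (a (2 * m + 2) : ℤ) * ((a (2 * m + 4) : ℤ) + a (2 * m + 3))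
      - (a (2 * m + 3) : ℤ) * a (2 * m + 4) = χ := by
    have h := hEe (m + 1)
    rw [(by omega : 2 * (m + 1) = 2 * m + 2), (by omega : 2 * m + 2 + 3 = 2 * m + 5),
      (by omega : 2 * m + 2 + 1 = 2 * m + 3), (by omega : 2 * m + 2 + 2 = 2 * m + 4)] at h
    have h5 : (a (2 * m + 5) : ℤ) = a (2 * m + 4) + a (2 * m + 3) := by
      exact_mod_cast hrec (2 * m + 3)
    linear_combination h - (a (2 * m + 2) : ℤ) * h5
  have hkeyR : (a (2 * m + 2) : ℝ) * ((a (2 * m + 4) : ℝ) + a (2 * m + 3))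
      - (a (2 * m + 3) : ℝ) * a (2 * m + 4) = (χ : ℝ) := by exact_mod_cast hkeyZ
  have hχR : (0 : ℝ) < (χ : ℝ) := by exact_mod_cast hχpos
  have hApos : (0 : ℝ) < (a (2 * m + 2) : ℝ) := hposR _
  have hBpos : (0 : ℝ) < (a (2 * m + 3) : ℝ) := hposR _
  have hCpos : (0 : ℝ) < (a (2 * m + 4) : ℝ) := hposR _
  -- key real identity
  have hkey : 1 / (a (2 * m + 3) : ℝ) + 1 / (a (2 * m + 4) : ℝ)
      = 1 / (a (2 * m + 2) : ℝ)
        + (χ : ℝ) / ((a (2 * m + 2) : ℝ) * (a (2 * m + 3) : ℝ) * (a (2 * m + 4) : ℝ)) := by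
    field_simp
    linear_combination hkeyR
  -- 1/A < 1/B + 1/C, hence 1/A < θ
  have hPpos : (0 : ℝ) < (a (2 * m + 2) : ℝ) * (a (2 * m + 3) : ℝ) * (a (2 * m + 4) : ℝ) := by
    positivity
  have h2lt : 1 / (a (2 * m + 2) : ℝ) < 1 / (a (2 * m + 3) : ℝ) + 1 / (a (2 * m + 4) : ℝ) := by
    rw [hkey]
    have : 0 < (χ : ℝ) / ((a (2 * m + 2) : ℝ) * (a (2 * m + 3) : ℝ) * (a (2 * m + 4) : ℝ)) :=
      div_pos hχR hPpos
    linarith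
  have hAθ : 1 / (a (2 * m + 2) : ℝ) < θ := h2lt.trans hlow
  -- θ < 1/a_{2m+1}
  have s1 : 1 / (a (2 * m + 3 + ξ) : ℝ) ≤ 1 / (a (2 * m + 3) : ℝ) :=
    one_div_le_one_div_of_le hBpos
      (by exact_mod_cast hmono (by omega : 2 * m + 3 ≤ 2 * m + 3 + ξ))
  have s2 : 1 / (a (2 * m + 2) : ℝ) + 1 / (a (2 * m + 3) : ℝ) < 1 / (a (2 * m + 1) : ℝ) := by
    have hz := hEo m
    have h4 : (a (2 * m + 4) : ℤ) = a (2 * m + 3) + a (2 * m + 2) := by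
      exact_mod_cast hrec (2 * m + 2)
    have hzZ : (a (2 * m + 1) : ℤ) * ((a (2 * m + 3) : ℤ) + a (2 * m + 2))
        = (a (2 * m + 2) : ℤ) * a (2 * m + 3) - χ := by
      linear_combination hz - (a (2 * m + 1) : ℤ) * h4
    have hzR : (a (2 * m + 1) : ℝ) * ((a (2 * m + 3) : ℝ) + a (2 * m + 2))
        = (a (2 * m + 2) : ℝ) * a (2 * m + 3) - (χ : ℝ) := by exact_mod_cast hzZ
    have hDpos : (0 : ℝ) < (a (2 * m + 1) : ℝ) := hposR _
    rw [div_add_div _ _ hApos.ne' hBpos.ne', div_lt_div_iff₀ (by positivity) hDpos]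
    nlinarith [hzR, hχR]
  have hθ1 : θ < 1 / (a (2 * m + 1) : ℝ) := lt_of_le_of_lt hhigh (by linarith)
  -- g₁ = 2m+2
  have hg1le : g₁ ≤ 2 * m + 2 := hg₁.2 ⟨by omega, hAθ⟩
  have hg1ge : 2 * m + 2 ≤ g₁ := by
    by_contra h
    push_neg at h
    have hle : a g₁ ≤ a (2 * m + 1) := hmono (by omega)
    have h1 : 1 / (a (2 * m + 1) : ℝ) ≤ 1 / (a g₁ : ℝ) :=
      one_div_le_one_div_of_le (hposR _) (by exact_mod_cast hle)
    have h2 := hg₁.1.2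
    linarith
  have hg1 : g₁ = 2 * m + 2 := le_antisymm hg1le hg1ge
  -- g₂ ≥ 2m+4+ξ
  have hg2mem := hg₂.1
  rw [hg1] at hg2mem
  have hg2lt : 1 / (a g₂ : ℝ) < 1 / (a (2 * m + 3 + ξ) : ℝ) := by
    have h1 := hg2mem.2
    have h2 : θ - 1 / (a (2 * m + 2) : ℝ) ≤ 1 / (a (2 * m + 3 + ξ) : ℝ) := by linarith [hhigh]
    exact lt_of_lt_of_le h1 h2
  have hg2ge : 2 * m + 4 + ξ ≤ g₂ := by
    by_contra h
    push_neg at h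
    have hle : a g₂ ≤ a (2 * m + 3 + ξ) := hmono (by omega)
    have : 1 / (a (2 * m + 3 + ξ) : ℝ) ≤ 1 / (a g₂ : ℝ) :=
      one_div_le_one_div_of_le (hposR _) (by exact_mod_cast hle)
    linarith
  -- maximality of ξ
  have hnot : ¬ (χ * (a (2 * m + 3 + (ξ + 1)) : ℤ)
      ≤ (a (2 * m + 2) : ℤ) * (a (2 * m + 3) : ℤ) * (a (2 * m + 4) : ℤ)) := by
    intro h
    have := hξ.2 h
    omega
  push_neg at hnot
  rw [(by omega : 2 * m + 3 + (ξ + 1) = 2 * m + 4 + ξ)] at hnot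
  have hg2big : (a (2 * m + 2) : ℤ) * (a (2 * m + 3) : ℤ) * (a (2 * m + 4) : ℤ)
      < χ * (a g₂ : ℤ) := by
    calc (a (2 * m + 2) : ℤ) * (a (2 * m + 3) : ℤ) * (a (2 * m + 4) : ℤ)
        < χ * (a (2 * m + 4 + ξ) : ℤ) := hnot
      _ ≤ χ * (a g₂ : ℤ) := by
          apply mul_le_mul_of_nonneg_left _ hχpos.le
          exact_mod_cast hmono hg2ge
  have hg2bigR : (a (2 * m + 2) : ℝ) * (a (2 * m + 3) : ℝ) * (a (2 * m + 4) : ℝ)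
      < (χ : ℝ) * (a g₂ : ℝ) := by exact_mod_cast hg2big
  have hg2posR : (0 : ℝ) < (a g₂ : ℝ) := hposR _
  have hfin : 1 / (a g₂ : ℝ)
      < (χ : ℝ) / ((a (2 * m + 2) : ℝ) * (a (2 * m + 3) : ℝ) * (a (2 * m + 4) : ℝ)) := by
    rw [div_lt_div_iff₀ hg2posR hPpos]
    linarith
  refine ⟨2 * m + 3, 2 * m + 4, by omega, by omega, hlow, ?_⟩
  rw [hg1]
  calc 1 / (a (2 * m + 2) : ℝ) + 1 / (a g₂ : ℝ)
      < 1 / (a (2 * m + 2) : ℝ)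
        + (χ : ℝ) / ((a (2 * m + 2) : ℝ) * (a (2 * m + 3) : ℝ) * (a (2 * m + 4) : ℝ)) := by
        linarith
    _ = 1 / (a (2 * m + 3) : ℝ) + 1 / (a (2 * m + 4) : ℝ) := hkey.symm
end
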